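/- Suppose G : A → ℝ^m is strongly differentiable at an interior point u of A ⊆ ℝ^m and the derivative G'(u) is a singular (non-invertible) linear map. Then for every ε > 0 there is δ > 0 such that B(u,δ) ⊆ A and V*(G(I)) ≤ ε·V(I) for every cube I contained in B(u,δ). -/
import Mathlib


open Set Metric MeasureTheory
open scoped Pointwise

/-- `f` is strongly (strictly) differentiable at `u`, an interior point of `s`,
with derivative `A`. -/
def HasStrongDerivAt {m n : ℕ} (f : (Fin m → ℝ) → (Fin n → ℝ))
    (A : (Fin m → ℝ) →L[ℝ] (Fin n → ℝ)) (s : Set (Fin m → ℝ)) (u : Fin m → ℝ) : Prop :=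
  ∀ ε > (0 : ℝ), ∃ δ > (0 : ℝ), ball u δ ⊆ s ∧
    ∀ x ∈ ball u δ, ∀ y ∈ ball u δ, ‖f x - f y - A (x - y)‖ ≤ ε * ‖x - y‖

/-- The outer Jordan content of a bounded set (the Lebesgue measure of its closure). -/
noncomputable def jContentOuter {m : ℕ} (X : Set (Fin m → ℝ)) : ℝ :=
  (volume (closure X)).toReal

/-- Sard-type lemma at a point of strong differentiability with singular derivative:
the images of small cubes (sup-norm closed balls) around the point have small outer
Jordan content compared to the cubes' volume. -/
theorem sard_lemma_pointwise {m : ℕ} (A : Set (Fin m → ℝ)) (u : Fin m → ℝ)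
    (G : (Fin m → ℝ) → (Fin m → ℝ)) (A' : (Fin m → ℝ) →L[ℝ] (Fin m → ℝ))
    (hG : HasStrongDerivAt G A' A u)
    (hsing : LinearMap.det (A' : (Fin m → ℝ) →ₗ[ℝ] (Fin m → ℝ)) = 0) :
    ∀ ε > (0 : ℝ), ∃ δ > (0 : ℝ), ball u δ ⊆ A ∧
      ∀ (x : Fin m → ℝ) (r : ℝ), 0 < r → closedBall x r ⊆ ball u δ →
        jContentOuter (G '' closedBall x r) ≤ ε * (volume (closedBall x r)).toReal := by
  intro ε hε
  -- the image of the unit ball under the singular derivative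
  set K : Set (Fin m → ℝ) := A' '' closedBall 0 1 with hKdef
  have hKcomp : IsCompact K := (isCompact_closedBall 0 1).image A'.continuous
  have hK0 : volume K = 0 := by
    have := MeasureTheory.Measure.addHaar_image_linearMap (volume : Measure (Fin m → ℝ))
      (A' : (Fin m → ℝ) →ₗ[ℝ] (Fin m → ℝ)) (closedBall 0 1)
    simp only [hsing, abs_zero, ENNReal.ofReal_zero, zero_mul] at this; exact this
  have hc : (0 : ℝ) < ε * 2 ^ m := by positivity
  -- an open set of small measure containing K
  have hlt : volume K < ENNReal.ofReal (ε * 2 ^ m) := by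
    rw [hK0]; exact ENNReal.ofReal_pos.2 hc
  obtain ⟨U, hKU, hUopen, hUvol⟩ :=
    Set.exists_isOpen_lt_of_lt K (ENNReal.ofReal (ε * 2 ^ m)) hlt
  obtain ⟨η, hηpos, hη⟩ := hKcomp.exists_cthickening_subset_open hUopen hKU
  obtain ⟨δ, hδpos, hδA, hδ⟩ := hG η hηpos
  refine ⟨δ, hδpos, hδA, ?_⟩
  intro x r hr hsub
  set S : Set (Fin m → ℝ) := cthickening η K with hSdef
  have hScl : IsClosed S := isClosed_cthickening
  have hSbdd : Bornology.IsBounded S := hKcomp.isBounded.cthickening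
  have hScomp : IsCompact S := Metric.isCompact_of_isClosed_isBounded hScl hSbdd
  -- the image of the cube is contained in a translated, scaled copy of S
  have himg : G '' closedBall x r ⊆ G x +ᵥ (r • S : Set (Fin m → ℝ)) := by
    rintro _ ⟨y, hy, rfl⟩
    have hx : x ∈ ball u δ := hsub (mem_closedBall_self hr.le)
    have hyδ : y ∈ ball u δ := hsub hy
    have hineq : ‖G y - G x - A' (y - x)‖ ≤ η * ‖y - x‖ := hδ y hyδ x hx
    rw [Set.mem_vadd_set_iff_neg_vadd_mem]
    rw [Set.mem_smul_set_iff_inv_smul_mem₀ hr.ne']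
    have hmemK : A' (r⁻¹ • (y - x)) ∈ K := by
      refine ⟨r⁻¹ • (y - x), ?_, rfl⟩
      rw [mem_closedBall_zero_iff, norm_smul, norm_inv, Real.norm_of_nonneg hr.le]
      have : ‖y - x‖ ≤ r := by
        rw [← dist_eq_norm]; exact mem_closedBall.1 hy
      calc r⁻¹ * ‖y - x‖ ≤ r⁻¹ * r := by
            exact mul_le_mul_of_nonneg_left this (inv_nonneg.2 hr.le)
        _ = 1 := inv_mul_cancel₀ hr.ne'
    refine mem_cthickening_of_dist_le _ _ _ _ hmemK ?_
    rw [dist_eq_norm]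
    have : r⁻¹ • (-G x +ᵥ G y) - A' (r⁻¹ • (y - x))
        = r⁻¹ • (G y - G x - A' (y - x)) := by
      simp only [vadd_eq_add, _root_.map_smul]
      module
    rw [this, norm_smul, norm_inv, Real.norm_of_nonneg hr.le]
    calc r⁻¹ * ‖G y - G x - A' (y - x)‖ ≤ r⁻¹ * (η * ‖y - x‖) := by
          exact mul_le_mul_of_nonneg_left hineq (inv_nonneg.2 hr.le)
      _ ≤ r⁻¹ * (η * r) := by
          refine mul_le_mul_of_nonneg_left ?_ (inv_nonneg.2 hr.le)
          refine mul_le_mul_of_nonneg_left ?_ hηpos.le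
          rw [← dist_eq_norm]; exact mem_closedBall.1 hy
      _ = η := by field_simp
  -- the set on the right is closed
  have hclosed : IsClosed (G x +ᵥ (r • S : Set (Fin m → ℝ))) := by
    have : IsCompact (G x +ᵥ (r • S : Set (Fin m → ℝ))) := (hScomp.smul r).vadd (G x)
    exact this.isClosed
  have hclsub : closure (G '' closedBall x r) ⊆ G x +ᵥ (r • S : Set (Fin m → ℝ)) :=
    closure_minimal himg hclosed
  -- measure estimate
  have hfr : Module.finrank ℝ (Fin m → ℝ) = m := by
    simp [Module.finrank_fintype_fun_eq_card]
  have hvol1 : volume (G x +ᵥ (r • S : Set (Fin m → ℝ))) = ENNReal.ofReal (r ^ m) * volume S := by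
    rw [measure_vadd, MeasureTheory.Measure.addHaar_smul, hfr,
      abs_of_nonneg (pow_nonneg hr.le m)]
  have hvolS : volume S ≤ ENNReal.ofReal (ε * 2 ^ m) :=
    le_trans (measure_mono hη) hUvol.le
  have hbound : volume (closure (G '' closedBall x r))
      ≤ ENNReal.ofReal (ε * 2 ^ m * r ^ m) := by
    calc volume (closure (G '' closedBall x r)) ≤ volume (G x +ᵥ (r • S : Set (Fin m → ℝ))) :=
          measure_mono hclsub
      _ = ENNReal.ofReal (r ^ m) * volume S := hvol1
      _ ≤ ENNReal.ofReal (r ^ m) * ENNReal.ofReal (ε * 2 ^ m) := by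
          exact mul_le_mul_right hvolS _
      _ = ENNReal.ofReal (ε * 2 ^ m * r ^ m) := by
          rw [← ENNReal.ofReal_mul (pow_nonneg hr.le m)]
          ring_nf
  have hcube : (volume (closedBall x r)).toReal = (2 * r) ^ m := by
    rw [Real.volume_pi_closedBall x hr.le, ENNReal.toReal_ofReal (by positivity)]
    simp
  rw [jContentOuter, hcube]
  have h1 : (volume (closure (G '' closedBall x r))).toReal ≤ ε * 2 ^ m * r ^ m := by
    refine ENNReal.toReal_le_of_le_ofReal (by positivity) hbound
  calc (volume (closure (G '' closedBall x r))).toReal ≤ ε * 2 ^ m * r ^ m := h1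
    _ = ε * (2 * r) ^ m := by ring
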